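/- For the 3-user LCBC with subspaces U_k = ⟨[V_k', V_k]⟩ ⊆ F_q^d and i.i.d. uniform data X ∈ F_q^{d×L}, any valid broadcast S satisfies 2H(S) ≥ max_{ℓ∈{1,2,3}} rk(U₁₂₃ ∩ V_ℓ')·L + rk((U₁₂+U₁₃) ∩ V₁')·L + rk(U₃∩(U₁+U₂) ∩ V₃')·L + rk(U₂∩(U₁+U₃) ∩ V₂')·L + 2L·rk(U₁+U₂+U₃) − 2L·(rk(V₁')+rk(V₂')+rk(V₃')), where U₁₂₃ = U₁∩U₂∩U₃, U_{ij} = U_i∩U_j, and entropy is in q-ary units. -/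

import Mathlib

open scoped BigOperators
open Matrix

/-- Probability that the random variable `X` takes the value `a`. -/
noncomputable def pOf {Ω α : Type*} [Fintype Ω] [DecidableEq α]
    (p : Ω → ℝ) (X : Ω → α) (a : α) : ℝ :=
  ∑ ω ∈ Finset.univ.filter (fun ω => X ω = a), p ω

/-- Shannon entropy (natural units) of a finitely-valued random variable. -/
noncomputable def Hent {Ω α : Type*} [Fintype Ω] [Fintype α] [DecidableEq α]
    (p : Ω → ℝ) (X : Ω → α) : ℝ :=
  ∑ a : α, Real.negMulLog (pOf p X a)

/-- Column span of a matrix, as a submodule of `F^d`. -/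
noncomputable def colSpan {F : Type*} [Field F] {d : ℕ} {n : Type*} [Fintype n]
    (M : Matrix (Fin d) n F) : Submodule F (Fin d → F) :=
  LinearMap.range M.mulVecLin


section AuxLCBC
open Finset
open scoped Classical

section Core
variable {Ω : Type*} [Fintype Ω]

noncomputable def fib {α : Type*} (f : Ω → α) (ω : Ω) : ℕ :=
  (Finset.univ.filter (fun ω' => f ω' = f ω)).card

lemma fib_pos {α : Type*} (f : Ω → α) (ω : Ω) : 0 < fib f ω := by
  unfold fib; exact Finset.card_pos.2 ⟨ω, by simp⟩

lemma fib_congr {α : Type*} (f : Ω → α) {ω ω' : Ω} (h : f ω = f ω') :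
    fib f ω = fib f ω' := by
  unfold fib; congr 1; ext x; simp [h]

def Det {α β : Type*} (f : Ω → α) (g : Ω → β) : Prop :=
  ∀ ω ω', g ω = g ω' → f ω = f ω'

lemma sum_if_const {δ : Type*} [Fintype δ] (q : δ → Prop) (w : ℝ) :
    (∑ x : δ, if q x then w else 0) = ((Finset.univ.filter q).card : ℝ) * w := by
  rw [← Finset.sum_filter, Finset.sum_const, nsmul_eq_mul]

lemma key_count {α β γ : Type*} (f : Ω → α) (g : Ω → β) (c : Ω → γ)
    (hf : Det c f) (hg : Det c g) :
    ∑ ω : Ω, (fib f ω * fib g ω : ℝ) /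
        ((fib (fun ω' => (f ω', g ω')) ω : ℝ) * (fib c ω : ℝ))
      ≤ (Fintype.card Ω : ℝ) := by
  set p : Ω → α × β := fun ω' => (f ω', g ω') with hp
  set z : Ω → ℝ := fun ω => ((fib p ω : ℝ) * (fib c ω : ℝ))⁻¹ with hz
  have step1 : ∀ ω : Ω, (fib f ω * fib g ω : ℝ) /
        ((fib p ω : ℝ) * (fib c ω : ℝ))
      = ∑ ω₁ : Ω, ∑ ω₂ : Ω, (if f ω₁ = f ω ∧ g ω₂ = g ω then z ω else 0) := by
    intro ω
    rw [Finset.sum_comm]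
    have : ∀ ω₂ : Ω, (∑ ω₁ : Ω, if f ω₁ = f ω ∧ g ω₂ = g ω then z ω else 0)
        = if g ω₂ = g ω then (fib f ω : ℝ) * z ω else 0 := by
      intro ω₂
      by_cases h2 : g ω₂ = g ω
      · simp only [h2, and_true, if_true]
        rw [sum_if_const]
        rfl
      · simp [h2]
    rw [Finset.sum_congr rfl (fun ω₂ _ => this ω₂), sum_if_const]
    show (fib f ω * fib g ω : ℝ) / ((fib p ω : ℝ) * (fib c ω : ℝ))
        = (fib g ω : ℝ) * ((fib f ω : ℝ) * z ω)
    rw [hz]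
    have h1 : ((fib p ω : ℝ)) ≠ 0 := by exact_mod_cast (fib_pos p ω).ne'
    have h2 : ((fib c ω : ℝ)) ≠ 0 := by exact_mod_cast (fib_pos c ω).ne'
    field_simp
  calc ∑ ω : Ω, (fib f ω * fib g ω : ℝ) / ((fib p ω : ℝ) * (fib c ω : ℝ))
      = ∑ ω : Ω, ∑ ω₁ : Ω, ∑ ω₂ : Ω, (if f ω₁ = f ω ∧ g ω₂ = g ω then z ω else 0) :=
        Finset.sum_congr rfl (fun ω _ => step1 ω)
    _ = ∑ ω₁ : Ω, ∑ ω₂ : Ω, ∑ ω : Ω, (if f ω₁ = f ω ∧ g ω₂ = g ω then z ω else 0) := by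
        rw [Finset.sum_comm]
        exact Finset.sum_congr rfl (fun ω₁ _ => Finset.sum_comm)
    _ ≤ ∑ ω₁ : Ω, ∑ ω₂ : Ω, (if c ω₂ = c ω₁ then ((fib c ω₁ : ℝ))⁻¹ else 0) := by
        apply Finset.sum_le_sum
        intro ω₁ _
        apply Finset.sum_le_sum
        intro ω₂ _
        set K : Finset Ω := Finset.univ.filter (fun ω => f ω₁ = f ω ∧ g ω₂ = g ω) with hK
        have hsum : (∑ ω : Ω, if f ω₁ = f ω ∧ g ω₂ = g ω then z ω else 0)
            = ∑ ω ∈ K, z ω := by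
          rw [Finset.sum_filter]
        rw [hsum]
        by_cases hne : K.Nonempty
        · obtain ⟨ω₀, hω₀⟩ := hne
          simp only [hK, Finset.mem_filter, Finset.mem_univ, true_and] at hω₀
          have hcc : c ω₂ = c ω₁ := by
            have h1 : c ω₁ = c ω₀ := hf ω₁ ω₀ hω₀.1
            have h2 : c ω₂ = c ω₀ := hg ω₂ ω₀ hω₀.2
            rw [h1, h2]
          rw [if_pos hcc]
          have hterm : ∀ ω ∈ K, z ω = ((K.card : ℝ) * (fib c ω₁ : ℝ))⁻¹ := by
            intro ω hω
            simp only [hK, Finset.mem_filter, Finset.mem_univ, true_and] at hω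
            have h1 : fib p ω = K.card := by
              unfold fib
              congr 1
              ext x
              simp only [Finset.mem_filter, Finset.mem_univ, true_and, hp,
                Prod.mk.injEq, hK]
              constructor
              · rintro ⟨h', h''⟩
                exact ⟨hω.1.trans h'.symm ▸ (hω.1.trans h'.symm).symm ▸ rfl, by rw [h'', ← hω.2]⟩
              · rintro ⟨h', h''⟩
                exact ⟨h'.symm.trans hω.1 |>.symm ▸ rfl, by rw [← h'', hω.2]⟩
            have h2 : fib c ω = fib c ω₁ := fib_congr c (hf ω ω₁ hω.1.symm)
            rw [hz]
            simp only [h1, h2]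
          rw [Finset.sum_congr rfl hterm, Finset.sum_const, nsmul_eq_mul]
          have hKpos : (0:ℝ) < K.card := by
            have : ω₀ ∈ K := by simp [hK, hω₀.1, hω₀.2]
            exact_mod_cast Finset.card_pos.2 ⟨ω₀, this⟩
          rw [mul_inv, ← mul_assoc, mul_inv_cancel₀ hKpos.ne', one_mul]
        · rw [Finset.not_nonempty_iff_eq_empty] at hne
          rw [hne, Finset.sum_empty]
          split <;> positivity
    _ ≤ (Fintype.card Ω : ℝ) := by
        have : ∀ ω₁ : Ω, (∑ ω₂ : Ω, if c ω₂ = c ω₁ then ((fib c ω₁ : ℝ))⁻¹ else 0) = 1 := by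
          intro ω₁
          rw [sum_if_const]
          have : ((Finset.univ.filter fun ω₂ => c ω₂ = c ω₁).card : ℝ) = (fib c ω₁ : ℝ) := by
            norm_cast
          rw [this]
          exact mul_inv_cancel₀ (by exact_mod_cast (fib_pos c ω₁).ne')
        rw [Finset.sum_congr rfl (fun ω₁ _ => this ω₁), Finset.sum_const, nsmul_eq_mul,
          mul_one, Finset.card_univ]

end Core

section Core2
variable {Ω : Type*} [Fintype Ω]

noncomputable def Dsum {α : Type*} (f : Ω → α) : ℝ :=
  ∑ ω : Ω, Real.log (fib f ω)

lemma Dsum_mono {α β : Type*} {f : Ω → α} {g : Ω → β} (h : Det f g) :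
    Dsum g ≤ Dsum f := by
  apply Finset.sum_le_sum
  intro ω _
  have hm : fib g ω ≤ fib f ω := by
    unfold fib
    apply Finset.card_le_card
    intro x hx
    simp only [Finset.mem_filter, Finset.mem_univ, true_and] at hx ⊢
    exact h x ω hx
  exact Real.log_le_log (by exact_mod_cast fib_pos g ω) (by exact_mod_cast hm)

lemma Dsum_submod {α β γ : Type*} (f : Ω → α) (g : Ω → β) (c : Ω → γ)
    (hf : Det c f) (hg : Det c g) :
    Dsum f + Dsum g ≤ Dsum (fun ω => (f ω, g ω)) + Dsum c := by
  set p : Ω → α × β := fun ω' => (f ω', g ω') with hp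
  have key := key_count f g c hf hg
  unfold Dsum
  rw [← Finset.sum_add_distrib, ← Finset.sum_add_distrib]
  rw [← sub_nonpos, ← Finset.sum_sub_distrib]
  have hle : ∀ ω : Ω, (Real.log (fib f ω) + Real.log (fib g ω)
      - (Real.log (fib p ω) + Real.log (fib c ω)))
      ≤ (fib f ω * fib g ω : ℝ) / ((fib p ω : ℝ) * (fib c ω : ℝ)) - 1 := by
    intro ω
    have hnf : (0:ℝ) < fib f ω := by exact_mod_cast fib_pos f ω
    have hng : (0:ℝ) < fib g ω := by exact_mod_cast fib_pos g ω
    have hnp : (0:ℝ) < fib p ω := by exact_mod_cast fib_pos p ω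
    have hnc : (0:ℝ) < fib c ω := by exact_mod_cast fib_pos c ω
    have hy : (0:ℝ) < (fib f ω * fib g ω : ℝ) / ((fib p ω : ℝ) * (fib c ω : ℝ)) := by
      positivity
    have := Real.log_le_sub_one_of_pos hy
    calc Real.log (fib f ω) + Real.log (fib g ω)
        - (Real.log (fib p ω) + Real.log (fib c ω))
        = Real.log ((fib f ω * fib g ω : ℝ) / ((fib p ω : ℝ) * (fib c ω : ℝ))) := by
          rw [Real.log_div (by positivity) (by positivity), Real.log_mul hnf.ne' hng.ne',
            Real.log_mul hnp.ne' hnc.ne']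
      _ ≤ _ := this
  calc ∑ ω : Ω, (Real.log (fib f ω) + Real.log (fib g ω)
        - (Real.log (fib p ω) + Real.log (fib c ω)))
      ≤ ∑ ω : Ω, ((fib f ω * fib g ω : ℝ) / ((fib p ω : ℝ) * (fib c ω : ℝ)) - 1) :=
        Finset.sum_le_sum (fun ω _ => hle ω)
    _ = (∑ ω : Ω, (fib f ω * fib g ω : ℝ) / ((fib p ω : ℝ) * (fib c ω : ℝ)))
        - (Fintype.card Ω : ℝ) := by
        rw [Finset.sum_sub_distrib, Finset.sum_const, nsmul_eq_mul, mul_one, Finset.card_univ]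
    _ ≤ 0 := by linarith

end Core2

section Core3
variable {Ω : Type*} [Fintype Ω] [Nonempty Ω]

lemma Hent_unif {α : Type*} [Fintype α] [DecidableEq α] (f : Ω → α) :
    Hent (fun _ : Ω => (Fintype.card Ω : ℝ)⁻¹) f
      = Real.log (Fintype.card Ω) - (Fintype.card Ω : ℝ)⁻¹ * Dsum f := by
  have hN : (0:ℝ) < (Fintype.card Ω : ℝ) := by
    exact_mod_cast Fintype.card_pos
  set N : ℝ := (Fintype.card Ω : ℝ) with hNdef
  have hpOf : ∀ a : α, pOf (fun _ : Ω => N⁻¹) f a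
      = ((Finset.univ.filter (fun ω => f ω = a)).card : ℝ) * N⁻¹ := by
    intro a
    unfold pOf
    rw [Finset.sum_const, nsmul_eq_mul]
  have hterm : ∀ a : α, Real.negMulLog (pOf (fun _ : Ω => N⁻¹) f a)
      = ((Finset.univ.filter (fun ω => f ω = a)).card : ℝ) * N⁻¹ * Real.log N
        - N⁻¹ * (((Finset.univ.filter (fun ω => f ω = a)).card : ℝ)
            * Real.log ((Finset.univ.filter (fun ω => f ω = a)).card)) := by
    intro a
    rw [hpOf]
    set n : ℝ := ((Finset.univ.filter (fun ω => f ω = a)).card : ℝ) with hn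
    rcases eq_or_ne n 0 with h0 | h0
    · simp [h0, Real.negMulLog]
    · have hnpos : (0:ℝ) < n := lt_of_le_of_ne (by positivity) (Ne.symm h0)
      rw [Real.negMulLog]
      rw [show n * N⁻¹ = n / N by ring, Real.log_div h0 hN.ne']
      field_simp
      ring
  unfold Hent
  rw [Finset.sum_congr rfl (fun a _ => hterm a), Finset.sum_sub_distrib]
  have hsum1 : ∑ a : α, ((Finset.univ.filter (fun ω => f ω = a)).card : ℝ) * N⁻¹ * Real.log N
      = Real.log N := by
    rw [← Finset.sum_mul, ← Finset.sum_mul]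
    have : ∑ a : α, ((Finset.univ.filter (fun ω => f ω = a)).card : ℝ) = N := by
      rw [hNdef]
      norm_cast
      rw [← Finset.card_univ]
      exact (Finset.card_eq_sum_card_fiberwise (fun x _ => Finset.mem_univ (f x))).symm ▸ rfl
    rw [this]
    field_simp
  have hsum2 : ∑ a : α, N⁻¹ * (((Finset.univ.filter (fun ω => f ω = a)).card : ℝ)
        * Real.log ((Finset.univ.filter (fun ω => f ω = a)).card))
      = N⁻¹ * Dsum f := by
    rw [← Finset.mul_sum]
    congr 1
    unfold Dsum
    rw [← Finset.sum_fiberwise_of_maps_to (fun x (_ : x ∈ Finset.univ) => Finset.mem_univ (f x))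
      (fun ω => Real.log (fib f ω))]
    apply Finset.sum_congr rfl
    intro a _
    have : ∀ ω ∈ Finset.univ.filter (fun ω => f ω = a),
        Real.log (fib f ω) = Real.log ((Finset.univ.filter (fun ω => f ω = a)).card) := by
      intro ω hω
      simp only [Finset.mem_filter, Finset.mem_univ, true_and] at hω
      congr 2
      unfold fib
      congr 1
      ext x
      simp [hω]
    rw [Finset.sum_congr rfl this, Finset.sum_const, nsmul_eq_mul]
  rw [hsum1, hsum2]

end Core3

section Core4
variable {Ω : Type*} [Fintype Ω] [Nonempty Ω]

lemma Hent_mono {α β : Type*} [Fintype α] [DecidableEq α] [Fintype β] [DecidableEq β]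
    {f : Ω → α} {g : Ω → β} (h : Det f g) :
    Hent (fun _ : Ω => (Fintype.card Ω : ℝ)⁻¹) f
      ≤ Hent (fun _ : Ω => (Fintype.card Ω : ℝ)⁻¹) g := by
  rw [Hent_unif, Hent_unif]
  have hN : (0:ℝ) < (Fintype.card Ω : ℝ) := by exact_mod_cast Fintype.card_pos
  have := Dsum_mono h
  have hinv : (0:ℝ) ≤ ((Fintype.card Ω : ℝ))⁻¹ := by positivity
  nlinarith [mul_le_mul_of_nonneg_left this hinv]

lemma Hent_submod {α β γ : Type*} [Fintype α] [DecidableEq α] [Fintype β] [DecidableEq β]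
    [Fintype γ] [DecidableEq γ]
    (f : Ω → α) (g : Ω → β) (c : Ω → γ) (hf : Det c f) (hg : Det c g) :
    Hent (fun _ : Ω => (Fintype.card Ω : ℝ)⁻¹) (fun ω => (f ω, g ω))
      + Hent (fun _ : Ω => (Fintype.card Ω : ℝ)⁻¹) c
    ≤ Hent (fun _ : Ω => (Fintype.card Ω : ℝ)⁻¹) f
      + Hent (fun _ : Ω => (Fintype.card Ω : ℝ)⁻¹) g := by
  rw [Hent_unif, Hent_unif, Hent_unif, Hent_unif]
  have hN : (0:ℝ) < (Fintype.card Ω : ℝ) := by exact_mod_cast Fintype.card_pos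
  have := Dsum_submod f g c hf hg
  have hinv : (0:ℝ) ≤ ((Fintype.card Ω : ℝ))⁻¹ := by positivity
  nlinarith [mul_le_mul_of_nonneg_left this hinv]

lemma Hent_eq_log_image {α : Type*} [Fintype α] [DecidableEq α]
    {f : Ω → α} (K : ℕ) (hK : ∀ ω, fib f ω = K) :
    Hent (fun _ : Ω => (Fintype.card Ω : ℝ)⁻¹) f
      = Real.log ((Finset.univ.image f).card) := by
  obtain ⟨ω₀⟩ := ‹Nonempty Ω›
  have hKpos : 0 < K := hK ω₀ ▸ fib_pos f ω₀
  have hD : Dsum f = (Fintype.card Ω : ℝ) * Real.log K := by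
    unfold Dsum
    rw [Finset.sum_congr rfl (fun ω _ => by rw [hK ω]), Finset.sum_const, nsmul_eq_mul,
      Finset.card_univ]
  have hNcard : Fintype.card Ω = (Finset.univ.image f).card * K := by
    rw [← Finset.card_univ (α := Ω),
      Finset.card_eq_sum_card_fiberwise
        (f := f) (t := Finset.univ.image f)
        (fun x _ => Finset.mem_image_of_mem f (Finset.mem_univ x))]
    rw [Finset.sum_congr rfl (fun a ha => ?_), Finset.sum_const, smul_eq_mul]
    · obtain ⟨x, _, hx⟩ := Finset.mem_image.1 ha
      show (Finset.univ.filter (fun ω => f ω = a)).card = K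
      rw [← hK x]
      unfold fib
      congr 1
      ext y
      simp [hx]
  have hIpos : 0 < (Finset.univ.image f).card := by
    exact Finset.card_pos.2 ⟨f ω₀, Finset.mem_image_of_mem f (Finset.mem_univ ω₀)⟩
  rw [Hent_unif, hD]
  have hN : (0:ℝ) < (Fintype.card Ω : ℝ) := by exact_mod_cast Fintype.card_pos
  rw [inv_mul_cancel_left₀ hN.ne']
  rw [hNcard]
  push_cast
  rw [Real.log_mul (by exact_mod_cast hIpos.ne') (by exact_mod_cast hKpos.ne')]
  ring

end Core4

section LinAlg
variable {F : Type*} [Field F] [Fintype F] [DecidableEq F] {d : ℕ}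

open Matrix

lemma colSpan_eq_span {n : Type*} [Fintype n] (M : Matrix (Fin d) n F) :
    colSpan M = Submodule.span F (Set.range Mᵀ) := by
  rw [colSpan, Matrix.range_mulVecLin]
  rfl

lemma colSpan_fromColumns {n₁ n₂ : Type*} [Fintype n₁] [Fintype n₂]
    (A : Matrix (Fin d) n₁ F) (B : Matrix (Fin d) n₂ F) :
    colSpan (fromCols A B) = colSpan A ⊔ colSpan B := by
  rw [colSpan_eq_span, colSpan_eq_span, colSpan_eq_span, transpose_fromCols]
  have : Set.range (fromRows Aᵀ Bᵀ) = Set.range Aᵀ ∪ Set.range Bᵀ := by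
    rw [fromRows]
    exact Set.Sum.elim_range _ _
  rw [this, Submodule.span_union]

lemma exists_factor {n₁ n₂ : Type*} [Fintype n₁] [Fintype n₂] [DecidableEq n₂]
    {M : Matrix (Fin d) n₁ F} {B : Matrix (Fin d) n₂ F}
    (h : colSpan B ≤ colSpan M) : ∃ C : Matrix n₁ n₂ F, B = M * C := by
  have hcol : ∀ j : n₂, (fun i => B i j) ∈ colSpan M := by
    intro j
    apply h
    rw [colSpan_eq_span]
    exact Submodule.subset_span ⟨j, rfl⟩
  choose c hc using fun j => hcol j
  refine ⟨Matrix.of (fun k j => c j k), ?_⟩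
  ext i j
  have := congrFun (hc j) i
  simp only [Matrix.mulVecLin_apply] at this
  rw [Matrix.mul_apply]
  rw [← this]
  rfl

lemma basis_matrix_exists (T : Submodule F (Fin d → F)) :
    ∃ B : Matrix (Fin d) (Fin (Module.finrank F T)) F,
      colSpan B = T ∧ B.rank = Module.finrank F T := by
  have : FiniteDimensional F T := inferInstance
  let b : Module.Basis (Fin (Module.finrank F T)) F T := Module.finBasis F T
  have hcs : colSpan (Matrix.of (fun i j => (b j : Fin d → F) i)) = T := by
    rw [colSpan_eq_span]
    have hr : Set.range (Matrix.of (fun i j => (b j : Fin d → F) i))ᵀ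
        = ⇑T.subtype '' Set.range b := by
      ext v
      constructor
      · rintro ⟨j, rfl⟩; exact ⟨b j, ⟨j, rfl⟩, rfl⟩
      · rintro ⟨w, ⟨j, rfl⟩, rfl⟩; exact ⟨j, rfl⟩
    rw [hr, ← Submodule.map_span, b.span_eq, Submodule.map_top, Submodule.range_subtype]
  refine ⟨Matrix.of (fun i j => (b j : Fin d → F) i), hcs, ?_⟩
  show Module.finrank F (colSpan (Matrix.of (fun i j => (b j : Fin d → F) i))) = _
  rw [hcs]

end LinAlg

section LinEnt
variable {F : Type*} [Field F] [Fintype F] [DecidableEq F] {d L m : ℕ}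

open Matrix

lemma row_eq (M : Matrix (Fin d) (Fin m) F) (X : Matrix (Fin d) (Fin L) F) (j : Fin L) :
    (fun c => (Xᵀ * M) j c) = Mᵀ.mulVec (fun k => X k j) := by
  funext c
  simp [Matrix.mul_apply, Matrix.mulVec, dotProduct, Matrix.transpose_apply, mul_comm]

lemma fib_linear_const (M : Matrix (Fin d) (Fin m) F) (X Y : Matrix (Fin d) (Fin L) F) :
    fib (fun Z : Matrix (Fin d) (Fin L) F => Zᵀ * M) X
      = fib (fun Z : Matrix (Fin d) (Fin L) F => Zᵀ * M) Y := by
  unfold fib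
  apply Finset.card_bij' (fun Z _ => Z - X + Y) (fun W _ => W - Y + X)
  · intro Z hZ
    simp only [Finset.mem_filter, Finset.mem_univ, true_and] at hZ ⊢
    rw [Matrix.transpose_add, Matrix.transpose_sub, Matrix.add_mul, Matrix.sub_mul, hZ]
    abel
  · intro W hW
    simp only [Finset.mem_filter, Finset.mem_univ, true_and] at hW ⊢
    rw [Matrix.transpose_add, Matrix.transpose_sub, Matrix.add_mul, Matrix.sub_mul, hW]
    abel
  · intro Z _; abel
  · intro W _; abel

lemma image_linear_card (M : Matrix (Fin d) (Fin m) F) :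
    ((Finset.univ.image (fun Z : Matrix (Fin d) (Fin L) F => Zᵀ * M)).card)
      = (Fintype.card F) ^ (M.rank * L) := by
  set S := LinearMap.range (Mᵀ.mulVecLin) with hS
  have himg : (Finset.univ.image (fun Z : Matrix (Fin d) (Fin L) F => Zᵀ * M))
      = Finset.univ.filter (fun W : Matrix (Fin L) (Fin m) F => ∀ j, (fun c => W j c) ∈ S) := by
    ext W
    simp only [Finset.mem_image, Finset.mem_univ, true_and, Finset.mem_filter]
    constructor
    · rintro ⟨X, rfl⟩ j
      rw [row_eq]
      exact ⟨fun k => X k j, rfl⟩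
    · intro h
      choose x hx using h
      refine ⟨Matrix.of (fun k j => x j k), ?_⟩
      ext j c
      have := congrFun (hx j) c
      simp only [Matrix.mulVecLin_apply] at this
      rw [← this]
      simp [Matrix.mul_apply, Matrix.mulVec, dotProduct, Matrix.transpose_apply, mul_comm]
  rw [himg, ← Fintype.card_subtype]
  have e : {W : Matrix (Fin L) (Fin m) F // ∀ j, (fun c => W j c) ∈ S}
      ≃ (∀ _ : Fin L, {v : Fin m → F // v ∈ S}) := Equiv.subtypePiEquivPi
  rw [Fintype.card_congr e, Fintype.card_pi]
  have hcardS : Fintype.card {v : Fin m → F // v ∈ S} = Fintype.card F ^ M.rank := by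
    have h1 : Fintype.card {v : Fin m → F // v ∈ S}
        = Fintype.card F ^ Module.finrank F S :=
      Module.card_eq_pow_finrank (K := F)
    rw [h1]
    congr 1
    show Module.finrank F (LinearMap.range (Mᵀ.mulVecLin)) = M.rank
    rw [show Module.finrank F (LinearMap.range (Mᵀ.mulVecLin)) = Mᵀ.rank from rfl,
      Matrix.rank_transpose]
  rw [Finset.prod_congr rfl (fun j _ => hcardS), Finset.prod_const, Finset.card_univ,
    Fintype.card_fin, ← pow_mul]

lemma Hent_linear (M : Matrix (Fin d) (Fin m) F) :
    Hent (fun _ : Matrix (Fin d) (Fin L) F =>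
        ((Fintype.card (Matrix (Fin d) (Fin L) F) : ℝ))⁻¹)
      (fun Z => Zᵀ * M)
      = ((M.rank * L : ℕ) : ℝ) * Real.log (Fintype.card F) := by
  have : Nonempty (Matrix (Fin d) (Fin L) F) := ⟨0⟩
  rw [Hent_eq_log_image (K := fib (fun Z : Matrix (Fin d) (Fin L) F => Zᵀ * M) 0)
    (fun ω => fib_linear_const M ω 0), image_linear_card]
  push_cast
  rw [Real.log_pow]
  push_cast
  ring

end LinEnt

set_option synthInstance.maxHeartbeats 1000000

section Compl
variable {F : Type*} [Field F] {d : ℕ}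

lemma exists_complement_in (P W : Submodule F (Fin d → F)) (hPW : P ≤ W) :
    ∃ Wc : Submodule F (Fin d → F),
      P ⊔ Wc = W ∧ Module.finrank F P + Module.finrank F Wc = Module.finrank F W := by
  let P' : Submodule F W := P.comap W.subtype
  obtain ⟨Q, hQ⟩ := P'.exists_isCompl
  refine ⟨Q.map W.subtype, ?_, ?_⟩
  · have hP : P = Submodule.map W.subtype P' := by
      rw [Submodule.map_comap_subtype, inf_of_le_right hPW]
    rw [hP, ← Submodule.map_sup, hQ.sup_eq_top, Submodule.map_top, Submodule.range_subtype]
  · have h1 : Module.finrank F P' + Module.finrank F Q = Module.finrank F W :=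
      Submodule.finrank_add_eq_of_isCompl hQ
    have h2 : Module.finrank F P' = Module.finrank F P := by
      have e := Submodule.comapSubtypeEquivOfLe hPW
      exact e.finrank_eq
    have h3 : Module.finrank F (Q.map W.subtype) = Module.finrank F Q := by
      have e := Submodule.equivMapOfInjective W.subtype (Submodule.injective_subtype W) Q
      exact e.finrank_eq.symm
    rw [h3, ← h2, h1]

end Compl

section Glue
variable {Ω : Type*} [Fintype Ω] [Nonempty Ω]

lemma Hent_const_zero :
    Hent (fun _ : Ω => (Fintype.card Ω : ℝ)⁻¹) (fun _ : Ω => ()) = 0 := by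
  rw [Hent_eq_log_image (K := Fintype.card Ω) ?hK]
  · have h1 : (Finset.univ.image (fun _ : Ω => ())).card = 1 := by
      apply le_antisymm
      · exact (Finset.card_le_univ _).trans (by simp)
      · exact Finset.card_pos.2 ⟨(), by
          obtain ⟨ω₀⟩ := ‹Nonempty Ω›
          exact Finset.mem_image_of_mem _ (Finset.mem_univ ω₀)⟩
    rw [h1]
    simp
  · intro ω
    unfold fib
    simp

lemma Hent_pair_le {α β : Type*} [Fintype α] [DecidableEq α] [Fintype β] [DecidableEq β]
    (f : Ω → α) (g : Ω → β) :
    Hent (fun _ : Ω => (Fintype.card Ω : ℝ)⁻¹) (fun ω => (f ω, g ω))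
      ≤ Hent (fun _ : Ω => (Fintype.card Ω : ℝ)⁻¹) f
        + Hent (fun _ : Ω => (Fintype.card Ω : ℝ)⁻¹) g := by
  have := Hent_submod f g (fun _ : Ω => ()) (fun _ _ _ => rfl) (fun _ _ _ => rfl)
  rw [Hent_const_zero] at this
  linarith

end Glue

section Glue2
variable {F : Type*} [Field F] [Fintype F] [DecidableEq F] {d L : ℕ}

open Matrix

lemma det_mul_of_le {n₁ n₂ : Type*} [Fintype n₁] [Fintype n₂] [DecidableEq n₂]
    {M : Matrix (Fin d) n₁ F} {B : Matrix (Fin d) n₂ F}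
    (h : colSpan B ≤ colSpan M) {X X' : Matrix (Fin d) (Fin L) F}
    (hXX : Xᵀ * M = X'ᵀ * M) : Xᵀ * B = X'ᵀ * B := by
  obtain ⟨C, rfl⟩ := exists_factor h
  rw [← Matrix.mul_assoc, hXX, Matrix.mul_assoc]

/-- lower bound on `H(Φ, XᵀB_T)` in terms of `H(Φ, XᵀV')` and the side-information
overlap `colSpan B_T ⊓ colSpan V'`. -/
lemma side_lower {r mv : ℕ} {𝒮 : Type*} [Fintype 𝒮] [DecidableEq 𝒮]
    (Φ : Matrix (Fin d) (Fin L) F → 𝒮)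
    (BT : Matrix (Fin d) (Fin r) F) (V' : Matrix (Fin d) (Fin mv) F) :
    Hent (fun _ : Matrix (Fin d) (Fin L) F =>
        ((Fintype.card (Matrix (Fin d) (Fin L) F) : ℝ))⁻¹) (fun X => (Φ X, Xᵀ * V'))
      ≤ Hent (fun _ : Matrix (Fin d) (Fin L) F =>
          ((Fintype.card (Matrix (Fin d) (Fin L) F) : ℝ))⁻¹) (fun X => (Φ X, Xᵀ * BT))
        + ((V'.rank * L : ℕ) : ℝ) * Real.log (Fintype.card F)
        - ((Module.finrank F ↥(colSpan BT ⊓ colSpan V') * L : ℕ) : ℝ)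
            * Real.log (Fintype.card F) := by
  haveI : Nonempty (Matrix (Fin d) (Fin L) F) := ⟨0⟩
  set T := colSpan BT with hT
  set w := colSpan V' with hw
  obtain ⟨BP, hBP, hBPr⟩ := basis_matrix_exists (F := F) (T ⊓ w)
  obtain ⟨Wc, hWcsup, hWcrank⟩ := exists_complement_in (T ⊓ w) w inf_le_right
  obtain ⟨BWc, hBWc, hBWcr⟩ := basis_matrix_exists (F := F) Wc
  -- H(Φ, X B_P) ≤ H(Φ, X B_T)
  have h1 : Hent (fun _ : Matrix (Fin d) (Fin L) F =>
        ((Fintype.card (Matrix (Fin d) (Fin L) F) : ℝ))⁻¹) (fun X => (Φ X, Xᵀ * BP))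
      ≤ Hent (fun _ : Matrix (Fin d) (Fin L) F =>
          ((Fintype.card (Matrix (Fin d) (Fin L) F) : ℝ))⁻¹) (fun X => (Φ X, Xᵀ * BT)) := by
    apply Hent_mono
    intro X X' hXX
    simp only [Prod.mk.injEq] at hXX ⊢
    obtain ⟨e1, e2⟩ := hXX
    exact ⟨e1, det_mul_of_le (le_trans (le_of_eq hBP) inf_le_left) e2⟩
  -- (Φ, XᵀV') is determined by ((Φ, X B_P), X B_Wc)
  have h2 : Hent (fun _ : Matrix (Fin d) (Fin L) F =>
        ((Fintype.card (Matrix (Fin d) (Fin L) F) : ℝ))⁻¹) (fun X => (Φ X, Xᵀ * V'))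
      ≤ Hent (fun _ : Matrix (Fin d) (Fin L) F =>
          ((Fintype.card (Matrix (Fin d) (Fin L) F) : ℝ))⁻¹)
        (fun X => ((Φ X, Xᵀ * BP), Xᵀ * BWc)) := by
    apply Hent_mono
    intro X X' hXX
    simp only [Prod.mk.injEq] at hXX ⊢
    obtain ⟨⟨e11, e12⟩, e3⟩ := hXX
    refine ⟨e11, ?_⟩
    have hle : colSpan V' ≤ colSpan (fromCols BP BWc) := by
      rw [colSpan_fromColumns, hBP, hBWc, hWcsup]
    have hM : Xᵀ * fromCols BP BWc = X'ᵀ * fromCols BP BWc := by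
      rw [Matrix.mul_fromCols, Matrix.mul_fromCols, e12, e3]
    exact det_mul_of_le hle hM
  have h3 := Hent_pair_le (Ω := Matrix (Fin d) (Fin L) F)
    (fun X => (Φ X, Xᵀ * BP)) (fun X => Xᵀ * BWc)
  have h4 := Hent_linear (L := L) BWc
  have hrank : Module.finrank F ↥(T ⊓ w) + BWc.rank = V'.rank := by
    rw [hBWcr]
    exact hWcrank
  have hq : (0:ℝ) ≤ Real.log (Fintype.card F) := by
    apply Real.log_nonneg
    have : 1 ≤ Fintype.card F := Fintype.card_pos
    exact_mod_cast this
  have hcast : ((BWc.rank * L : ℕ) : ℝ)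
      = ((V'.rank * L : ℕ) : ℝ) - ((Module.finrank F ↥(T ⊓ w) * L : ℕ) : ℝ) := by
    push_cast
    rw [← hrank]
    push_cast
    ring
  rw [h4, hcast] at h3
  linarith

end Glue2

end AuxLCBC

section AuxLCBC2
open Finset

set_option maxHeartbeats 2000000 in
/-- Functional-submodularity converse bound `Δ* ≥ Δ₂^{123}` for the
3-user LCBC. With `U_k = ⟨[V_k', V_k]⟩`, `U₁₂₃ = U₁∩U₂∩U₃`, `U_{ij} = U_i∩U_j`,
i.i.d. uniform data `X ∈ F_q^{d×L}` and any valid broadcast `S = Φ(X)`,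
`2H(S) ≥ max_ℓ rk(U₁₂₃∩V_ℓ')·L + rk((U₁₂+U₁₃)∩V₁')·L + rk(U₃∩(U₁+U₂)∩V₃')·L
+ rk(U₂∩(U₁+U₃)∩V₂')·L + 2L·rk(U₁+U₂+U₃) − 2L·(rk V₁'+rk V₂'+rk V₃')`
in q-ary units. -/
theorem lcbc_converse_delta_two
    {F : Type*} [Field F] [Fintype F] [DecidableEq F]
    {d L m₁ m₂ m₃ m₁' m₂' m₃' : ℕ}
    (V₁ : Matrix (Fin d) (Fin m₁) F)
    (V₂ : Matrix (Fin d) (Fin m₂) F)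
    (V₃ : Matrix (Fin d) (Fin m₃) F)
    (V₁' : Matrix (Fin d) (Fin m₁') F)
    (V₂' : Matrix (Fin d) (Fin m₂') F)
    (V₃' : Matrix (Fin d) (Fin m₃') F)
    (𝒮 : Type*) [Fintype 𝒮] [DecidableEq 𝒮]
    (Φ : Matrix (Fin d) (Fin L) F → 𝒮)
    (Ψ₁ : 𝒮 → Matrix (Fin L) (Fin m₁') F → Matrix (Fin L) (Fin m₁) F)
    (Ψ₂ : 𝒮 → Matrix (Fin L) (Fin m₂') F → Matrix (Fin L) (Fin m₂) F)
    (Ψ₃ : 𝒮 → Matrix (Fin L) (Fin m₃') F → Matrix (Fin L) (Fin m₃) F)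
    (hdec₁ : ∀ X : Matrix (Fin d) (Fin L) F, Ψ₁ (Φ X) (Xᵀ * V₁') = Xᵀ * V₁)
    (hdec₂ : ∀ X : Matrix (Fin d) (Fin L) F, Ψ₂ (Φ X) (Xᵀ * V₂') = Xᵀ * V₂)
    (hdec₃ : ∀ X : Matrix (Fin d) (Fin L) F, Ψ₃ (Φ X) (Xᵀ * V₃') = Xᵀ * V₃) :
    ((max (max
        (Module.finrank F ↥(colSpan (Matrix.fromCols V₁' V₁)
          ⊓ colSpan (Matrix.fromCols V₂' V₂)
          ⊓ colSpan (Matrix.fromCols V₃' V₃) ⊓ colSpan V₁'))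
        (Module.finrank F ↥(colSpan (Matrix.fromCols V₁' V₁)
          ⊓ colSpan (Matrix.fromCols V₂' V₂)
          ⊓ colSpan (Matrix.fromCols V₃' V₃) ⊓ colSpan V₂')))
        (Module.finrank F ↥(colSpan (Matrix.fromCols V₁' V₁)
          ⊓ colSpan (Matrix.fromCols V₂' V₂)
          ⊓ colSpan (Matrix.fromCols V₃' V₃) ⊓ colSpan V₃')) : ℝ)) * (L : ℝ)
    + ((Module.finrank F ↥(((colSpan (Matrix.fromCols V₁' V₁)
            ⊓ colSpan (Matrix.fromCols V₂' V₂))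
          ⊔ (colSpan (Matrix.fromCols V₁' V₁)
            ⊓ colSpan (Matrix.fromCols V₃' V₃))) ⊓ colSpan V₁') : ℝ)) * (L : ℝ)
    + ((Module.finrank F ↥(colSpan (Matrix.fromCols V₃' V₃)
          ⊓ (colSpan (Matrix.fromCols V₁' V₁) ⊔ colSpan (Matrix.fromCols V₂' V₂))
          ⊓ colSpan V₃') : ℝ)) * (L : ℝ)
    + ((Module.finrank F ↥(colSpan (Matrix.fromCols V₂' V₂)
          ⊓ (colSpan (Matrix.fromCols V₁' V₁) ⊔ colSpan (Matrix.fromCols V₃' V₃))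
          ⊓ colSpan V₂') : ℕ) : ℝ) * (L : ℝ)
    + 2 * (L : ℝ) * ((Module.finrank F ↥(colSpan (Matrix.fromCols V₁' V₁)
          ⊔ colSpan (Matrix.fromCols V₂' V₂)
          ⊔ colSpan (Matrix.fromCols V₃' V₃)) : ℕ) : ℝ)
    - 2 * (L : ℝ) * ((V₁'.rank : ℝ) + (V₂'.rank : ℝ) + (V₃'.rank : ℝ))
    ≤ 2 * (Hent (fun _ : Matrix (Fin d) (Fin L) F =>
          ((Fintype.card (Matrix (Fin d) (Fin L) F) : ℝ))⁻¹) Φ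
        / Real.log (Fintype.card F)) := by
  haveI hne : Nonempty (Matrix (Fin d) (Fin L) F) := ⟨0⟩
  have hqpos : (0:ℝ) < Real.log (Fintype.card F) :=
    Real.log_pos (by exact_mod_cast Fintype.one_lt_card)
  set W1 := Matrix.fromCols V₁' V₁ with hW1
  set W2 := Matrix.fromCols V₂' V₂ with hW2
  set W3 := Matrix.fromCols V₃' V₃ with hW3
  set u1 := colSpan W1 with hu1
  set u2 := colSpan W2 with hu2
  set u3 := colSpan W3 with hu3
  set w1 := colSpan V₁' with hw1
  set w2 := colSpan V₂' with hw2
  set w3 := colSpan V₃' with hw3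
  set T12 := u1 ⊓ u2 with hT12
  set T13 := u1 ⊓ u3 with hT13
  set T123 := T12 ⊓ u3 with hT123
  set TB := T12 ⊔ T13 with hTB
  set TC := u3 ⊓ (u1 ⊔ u2) with hTC
  set TD := u2 ⊓ (u1 ⊔ u3) with hTD
  set TE := u1 ⊔ u2 ⊔ u3 with hTE
  obtain ⟨B12, hB12, hB12r⟩ := basis_matrix_exists (F := F) T12
  obtain ⟨B13, hB13, hB13r⟩ := basis_matrix_exists (F := F) T13
  obtain ⟨B123, hB123, hB123r⟩ := basis_matrix_exists (F := F) T123
  obtain ⟨BB, hBBc, hBBr⟩ := basis_matrix_exists (F := F) TB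
  obtain ⟨BC, hBCc, hBCr⟩ := basis_matrix_exists (F := F) TC
  obtain ⟨BD, hBDc, hBDr⟩ := basis_matrix_exists (F := F) TD
  obtain ⟨BE, hBEc, hBEr⟩ := basis_matrix_exists (F := F) TE
  set NN : Matrix (Fin d) (Fin L) F → ℝ :=
    fun _ => ((Fintype.card (Matrix (Fin d) (Fin L) F) : ℝ))⁻¹ with hNN
  set A1 : Matrix (Fin d) (Fin L) F → 𝒮 × Matrix (Fin L) (Fin m₁') F :=
    fun X => (Φ X, Xᵀ * V₁') with hA1
  set A2 : Matrix (Fin d) (Fin L) F → 𝒮 × Matrix (Fin L) (Fin m₂') F :=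
    fun X => (Φ X, Xᵀ * V₂') with hA2
  set A3 : Matrix (Fin d) (Fin L) F → 𝒮 × Matrix (Fin L) (Fin m₃') F :=
    fun X => (Φ X, Xᵀ * V₃') with hA3
  set Q12 := fun X : Matrix (Fin d) (Fin L) F => (Φ X, Xᵀ * B12) with hQ12
  set Q13 := fun X : Matrix (Fin d) (Fin L) F => (Φ X, Xᵀ * B13) with hQ13
  set Q123 := fun X : Matrix (Fin d) (Fin L) F => (Φ X, Xᵀ * B123) with hQ123
  set QB := fun X : Matrix (Fin d) (Fin L) F => (Φ X, Xᵀ * BB) with hQB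
  set QC := fun X : Matrix (Fin d) (Fin L) F => (Φ X, Xᵀ * BC) with hQC
  set QD := fun X : Matrix (Fin d) (Fin L) F => (Φ X, Xᵀ * BD) with hQD
  -- decodability at the level of the U_k
  have dec1 : ∀ X X' : Matrix (Fin d) (Fin L) F, A1 X = A1 X' → Xᵀ * W1 = X'ᵀ * W1 := by
    intro X X' h
    simp only [hA1, Prod.mk.injEq] at h
    rw [hW1, Matrix.mul_fromCols, Matrix.mul_fromCols, h.2,
      ← hdec₁ X, ← hdec₁ X', h.1, h.2]
  have dec2 : ∀ X X' : Matrix (Fin d) (Fin L) F, A2 X = A2 X' → Xᵀ * W2 = X'ᵀ * W2 := by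
    intro X X' h
    simp only [hA2, Prod.mk.injEq] at h
    rw [hW2, Matrix.mul_fromCols, Matrix.mul_fromCols, h.2,
      ← hdec₂ X, ← hdec₂ X', h.1, h.2]
  have dec3 : ∀ X X' : Matrix (Fin d) (Fin L) F, A3 X = A3 X' → Xᵀ * W3 = X'ᵀ * W3 := by
    intro X X' h
    simp only [hA3, Prod.mk.injEq] at h
    rw [hW3, Matrix.mul_fromCols, Matrix.mul_fromCols, h.2,
      ← hdec₃ X, ← hdec₃ X', h.1, h.2]
  -- determination facts
  have D1 : Det Q12 A1 := by
    intro X X' h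
    have hw := dec1 X X' h
    simp only [hA1, Prod.mk.injEq] at h
    simp only [hQ12, Prod.mk.injEq]
    refine ⟨h.1, det_mul_of_le ?_ hw⟩
    rw [hB12, hT12]
    exact inf_le_left
  have D2 : Det Q12 A2 := by
    intro X X' h
    have hw := dec2 X X' h
    simp only [hA2, Prod.mk.injEq] at h
    simp only [hQ12, Prod.mk.injEq]
    refine ⟨h.1, det_mul_of_le ?_ hw⟩
    rw [hB12, hT12]
    exact inf_le_right
  have D3 : Det Q13 A1 := by
    intro X X' h
    have hw := dec1 X X' h
    simp only [hA1, Prod.mk.injEq] at h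
    simp only [hQ13, Prod.mk.injEq]
    refine ⟨h.1, det_mul_of_le ?_ hw⟩
    rw [hB13, hT13]
    exact inf_le_left
  have D4 : Det Q13 A3 := by
    intro X X' h
    have hw := dec3 X X' h
    simp only [hA3, Prod.mk.injEq] at h
    simp only [hQ13, Prod.mk.injEq]
    refine ⟨h.1, det_mul_of_le ?_ hw⟩
    rw [hB13, hT13]
    exact inf_le_right
  have D5 : Det Q123 Q12 := by
    intro X X' h
    simp only [hQ12, Prod.mk.injEq] at h
    simp only [hQ123, Prod.mk.injEq]
    refine ⟨h.1, det_mul_of_le ?_ h.2⟩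
    rw [hB123, hT123, hB12]
    exact inf_le_left
  have D6 : Det Q123 Q13 := by
    intro X X' h
    simp only [hQ13, Prod.mk.injEq] at h
    simp only [hQ123, Prod.mk.injEq]
    refine ⟨h.1, det_mul_of_le ?_ h.2⟩
    rw [hB123, hT123, hB13, hT12, hT13]
    exact le_inf (inf_le_left.trans inf_le_left) inf_le_right
  have D7 : Det QB (fun ω => (Q12 ω, Q13 ω)) := by
    intro X X' h
    simp only [Prod.mk.injEq] at h
    obtain ⟨e1, e2⟩ := h
    simp only [hQ12, Prod.mk.injEq] at e1
    simp only [hQ13, Prod.mk.injEq] at e2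
    simp only [hQB, Prod.mk.injEq]
    refine ⟨e1.1, det_mul_of_le (M := Matrix.fromCols B12 B13) ?_ ?_⟩
    · rw [hBBc, hTB, colSpan_fromColumns, hB12, hB13]
    · rw [Matrix.mul_fromCols Xᵀ B12 B13, Matrix.mul_fromCols X'ᵀ B12 B13, e1.2, e2.2]
  have D8 : Det QC (fun ω => (A1 ω, A2 ω)) := by
    intro X X' h
    simp only [Prod.mk.injEq] at h
    obtain ⟨e1, e2⟩ := h
    have hphi : Φ X = Φ X' := by
      have := congrArg Prod.fst e1
      simpa [hA1] using this
    simp only [hQC, Prod.mk.injEq]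
    refine ⟨hphi, det_mul_of_le (M := Matrix.fromCols W1 W2) ?_ ?_⟩
    · rw [hBCc, hTC, colSpan_fromColumns, ← hu1, ← hu2]
      exact inf_le_right
    · rw [Matrix.mul_fromCols Xᵀ W1 W2, Matrix.mul_fromCols X'ᵀ W1 W2,
        dec1 X X' e1, dec2 X X' e2]
  have D9 : Det QC A3 := by
    intro X X' h
    have hw := dec3 X X' h
    simp only [hA3, Prod.mk.injEq] at h
    simp only [hQC, Prod.mk.injEq]
    refine ⟨h.1, det_mul_of_le ?_ hw⟩
    rw [hBCc, hTC]
    exact inf_le_left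
  have D10 : Det QD (fun ω => (A1 ω, A3 ω)) := by
    intro X X' h
    simp only [Prod.mk.injEq] at h
    obtain ⟨e1, e3⟩ := h
    have hphi : Φ X = Φ X' := by
      have := congrArg Prod.fst e1
      simpa [hA1] using this
    simp only [hQD, Prod.mk.injEq]
    refine ⟨hphi, det_mul_of_le (M := Matrix.fromCols W1 W3) ?_ ?_⟩
    · rw [hBDc, hTD, colSpan_fromColumns, ← hu1, ← hu3]
      exact inf_le_right
    · rw [Matrix.mul_fromCols Xᵀ W1 W3, Matrix.mul_fromCols X'ᵀ W1 W3,
        dec1 X X' e1, dec3 X X' e3]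
  have D11 : Det QD A2 := by
    intro X X' h
    have hw := dec2 X X' h
    simp only [hA2, Prod.mk.injEq] at h
    simp only [hQD, Prod.mk.injEq]
    refine ⟨h.1, det_mul_of_le ?_ hw⟩
    rw [hBDc, hTD]
    exact inf_le_left
  have D12 : Det (fun X : Matrix (Fin d) (Fin L) F => Xᵀ * BE)
      (fun ω => ((A1 ω, A2 ω), A3 ω)) := by
    intro X X' h
    simp only [Prod.mk.injEq] at h
    obtain ⟨⟨e1, e2⟩, e3⟩ := h
    refine det_mul_of_le (M := Matrix.fromCols (Matrix.fromCols W1 W2) W3) ?_ ?_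
    · rw [hBEc, hTE, colSpan_fromColumns (Matrix.fromCols W1 W2) W3,
        colSpan_fromColumns W1 W2, ← hu1, ← hu2, ← hu3]
    · rw [Matrix.mul_fromCols Xᵀ (Matrix.fromCols W1 W2) W3,
        Matrix.mul_fromCols X'ᵀ (Matrix.fromCols W1 W2) W3,
        Matrix.mul_fromCols Xᵀ W1 W2, Matrix.mul_fromCols X'ᵀ W1 W2,
        dec1 X X' e1, dec2 X X' e2, dec3 X X' e3]
  have D13 : Det (fun X : Matrix (Fin d) (Fin L) F => Xᵀ * BE)
      (fun ω => ((A1 ω, A3 ω), A2 ω)) := by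
    intro X X' h
    simp only [Prod.mk.injEq] at h
    obtain ⟨⟨e1, e3⟩, e2⟩ := h
    refine det_mul_of_le (M := Matrix.fromCols (Matrix.fromCols W1 W3) W2) ?_ ?_
    · rw [hBEc, hTE, colSpan_fromColumns (Matrix.fromCols W1 W3) W2,
        colSpan_fromColumns W1 W3, ← hu1, ← hu2, ← hu3]
      exact sup_le (sup_le (le_sup_left.trans le_sup_left) le_sup_right)
        (le_sup_right.trans le_sup_left)
    · rw [Matrix.mul_fromCols Xᵀ (Matrix.fromCols W1 W3) W2,
        Matrix.mul_fromCols X'ᵀ (Matrix.fromCols W1 W3) W2,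
        Matrix.mul_fromCols Xᵀ W1 W3, Matrix.mul_fromCols X'ᵀ W1 W3,
        dec1 X X' e1, dec2 X X' e2, dec3 X X' e3]
  letI hd1 : DecidableEq (((𝒮 × Matrix (Fin L) (Fin m₁') F) × 𝒮 × Matrix (Fin L) (Fin m₂') F)
      × 𝒮 × Matrix (Fin L) (Fin m₃') F) := instDecidableEqProd
  letI hd2 : DecidableEq (((𝒮 × Matrix (Fin L) (Fin m₁') F) × 𝒮 × Matrix (Fin L) (Fin m₃') F)
      × 𝒮 × Matrix (Fin L) (Fin m₂') F) := instDecidableEqProd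
  -- submodularity steps
  have S1 : Hent NN (fun ω => (A1 ω, A2 ω)) + Hent NN Q12 ≤ Hent NN A1 + Hent NN A2 :=
    Hent_submod _ _ _ D1 D2
  have S2 : Hent NN (fun ω => (A1 ω, A3 ω)) + Hent NN Q13 ≤ Hent NN A1 + Hent NN A3 :=
    Hent_submod _ _ _ D3 D4
  have S3 : Hent NN (fun ω => (Q12 ω, Q13 ω)) + Hent NN Q123 ≤ Hent NN Q12 + Hent NN Q13 :=
    Hent_submod _ _ _ D5 D6
  have S4 : Hent NN (fun ω => ((A1 ω, A2 ω), A3 ω)) + Hent NN QC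
      ≤ Hent NN (fun ω => (A1 ω, A2 ω)) + Hent NN A3 :=
    Hent_submod (fun ω => (A1 ω, A2 ω)) A3 QC D8 D9
  have S5 : Hent NN (fun ω => ((A1 ω, A3 ω), A2 ω)) + Hent NN QD
      ≤ Hent NN (fun ω => (A1 ω, A3 ω)) + Hent NN A2 :=
    Hent_submod (fun ω => (A1 ω, A3 ω)) A2 QD D10 D11
  -- monotonicity steps
  have M3 : Hent NN QB ≤ Hent NN (fun ω => (Q12 ω, Q13 ω)) := Hent_mono D7
  have M4 : Hent NN (fun X : Matrix (Fin d) (Fin L) F => Xᵀ * BE)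
      ≤ Hent NN (fun ω => ((A1 ω, A2 ω), A3 ω)) := Hent_mono D12
  have M5 : Hent NN (fun X : Matrix (Fin d) (Fin L) F => Xᵀ * BE)
      ≤ Hent NN (fun ω => ((A1 ω, A3 ω), A2 ω)) := Hent_mono D13
  -- exact value of the full linear entropy
  have VE : Hent NN (fun X : Matrix (Fin d) (Fin L) F => Xᵀ * BE)
      = ((Module.finrank F ↥TE * L : ℕ) : ℝ) * Real.log (Fintype.card F) := by
    have h := Hent_linear (L := L) BE
    rw [hBEr] at h
    exact h
  -- side-information lower bounds
  have SLB : Hent NN A1 ≤ Hent NN QB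
      + ((V₁'.rank * L : ℕ) : ℝ) * Real.log (Fintype.card F)
      - ((Module.finrank F ↥(TB ⊓ w1) * L : ℕ) : ℝ) * Real.log (Fintype.card F) := by
    have h := side_lower Φ BB V₁'
    rw [hBBc] at h
    exact h
  have SL1 : Hent NN A1 ≤ Hent NN Q123
      + ((V₁'.rank * L : ℕ) : ℝ) * Real.log (Fintype.card F)
      - ((Module.finrank F ↥(T123 ⊓ w1) * L : ℕ) : ℝ) * Real.log (Fintype.card F) := by
    have h := side_lower Φ B123 V₁'
    rw [hB123] at h
    exact h
  have SL2 : Hent NN A2 ≤ Hent NN Q123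
      + ((V₂'.rank * L : ℕ) : ℝ) * Real.log (Fintype.card F)
      - ((Module.finrank F ↥(T123 ⊓ w2) * L : ℕ) : ℝ) * Real.log (Fintype.card F) := by
    have h := side_lower Φ B123 V₂'
    rw [hB123] at h
    exact h
  have SL3 : Hent NN A3 ≤ Hent NN Q123
      + ((V₃'.rank * L : ℕ) : ℝ) * Real.log (Fintype.card F)
      - ((Module.finrank F ↥(T123 ⊓ w3) * L : ℕ) : ℝ) * Real.log (Fintype.card F) := by
    have h := side_lower Φ B123 V₃'
    rw [hB123] at h
    exact h
  have SLC : Hent NN A3 ≤ Hent NN QC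
      + ((V₃'.rank * L : ℕ) : ℝ) * Real.log (Fintype.card F)
      - ((Module.finrank F ↥(TC ⊓ w3) * L : ℕ) : ℝ) * Real.log (Fintype.card F) := by
    have h := side_lower Φ BC V₃'
    rw [hBCc] at h
    exact h
  have SLD : Hent NN A2 ≤ Hent NN QD
      + ((V₂'.rank * L : ℕ) : ℝ) * Real.log (Fintype.card F)
      - ((Module.finrank F ↥(TD ⊓ w2) * L : ℕ) : ℝ) * Real.log (Fintype.card F) := by
    have h := side_lower Φ BD V₂'
    rw [hBDc] at h
    exact h
  -- upper bounds on the augmented broadcasts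
  have U1 : Hent NN A1 ≤ Hent NN Φ
      + ((V₁'.rank * L : ℕ) : ℝ) * Real.log (Fintype.card F) := by
    have h := Hent_pair_le (Ω := Matrix (Fin d) (Fin L) F) Φ (fun X => Xᵀ * V₁')
    rw [Hent_linear (L := L) V₁'] at h
    exact h
  have U2 : Hent NN A2 ≤ Hent NN Φ
      + ((V₂'.rank * L : ℕ) : ℝ) * Real.log (Fintype.card F) := by
    have h := Hent_pair_le (Ω := Matrix (Fin d) (Fin L) F) Φ (fun X => Xᵀ * V₂')
    rw [Hent_linear (L := L) V₂'] at h
    exact h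
  have U3 : Hent NN A3 ≤ Hent NN Φ
      + ((V₃'.rank * L : ℕ) : ℝ) * Real.log (Fintype.card F) := by
    have h := Hent_pair_le (Ω := Matrix (Fin d) (Fin L) F) Φ (fun X => Xᵀ * V₃')
    rw [Hent_linear (L := L) V₃'] at h
    exact h
  -- combine the submodularity chain
  have comb : Hent NN QB + Hent NN Q123 + Hent NN QC + Hent NN QD
      + 2 * (((Module.finrank F ↥TE * L : ℕ) : ℝ) * Real.log (Fintype.card F))
      ≤ 2 * Hent NN A1 + 2 * Hent NN A2 + 2 * Hent NN A3 := by
    linarith [S1, S2, S3, S4, S5, M3, M4, M5, VE.le, VE.ge]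
  have final1 : (Module.finrank F ↥(T123 ⊓ w1) : ℝ) * (L:ℝ) * Real.log (Fintype.card F)
      + (Module.finrank F ↥(TB ⊓ w1) : ℝ) * (L:ℝ) * Real.log (Fintype.card F)
      + (Module.finrank F ↥(TC ⊓ w3) : ℝ) * (L:ℝ) * Real.log (Fintype.card F)
      + (Module.finrank F ↥(TD ⊓ w2) : ℝ) * (L:ℝ) * Real.log (Fintype.card F)
      + 2 * (L:ℝ) * (Module.finrank F ↥TE : ℝ) * Real.log (Fintype.card F)
      - 2 * (L:ℝ) * ((V₁'.rank : ℝ) + (V₂'.rank : ℝ) + (V₃'.rank : ℝ))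
          * Real.log (Fintype.card F)
      ≤ 2 * Hent NN Φ := by
    push_cast at comb SLB SL1 SLC SLD U2 U3 ⊢
    linarith [comb, SLB, SL1, SLC, SLD, U2, U3]
  have final2 : (Module.finrank F ↥(T123 ⊓ w2) : ℝ) * (L:ℝ) * Real.log (Fintype.card F)
      + (Module.finrank F ↥(TB ⊓ w1) : ℝ) * (L:ℝ) * Real.log (Fintype.card F)
      + (Module.finrank F ↥(TC ⊓ w3) : ℝ) * (L:ℝ) * Real.log (Fintype.card F)
      + (Module.finrank F ↥(TD ⊓ w2) : ℝ) * (L:ℝ) * Real.log (Fintype.card F)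
      + 2 * (L:ℝ) * (Module.finrank F ↥TE : ℝ) * Real.log (Fintype.card F)
      - 2 * (L:ℝ) * ((V₁'.rank : ℝ) + (V₂'.rank : ℝ) + (V₃'.rank : ℝ))
          * Real.log (Fintype.card F)
      ≤ 2 * Hent NN Φ := by
    push_cast at comb SLB SL2 SLC SLD U1 U3 ⊢
    linarith [comb, SLB, SL2, SLC, SLD, U1, U3]
  have final3 : (Module.finrank F ↥(T123 ⊓ w3) : ℝ) * (L:ℝ) * Real.log (Fintype.card F)
      + (Module.finrank F ↥(TB ⊓ w1) : ℝ) * (L:ℝ) * Real.log (Fintype.card F)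
      + (Module.finrank F ↥(TC ⊓ w3) : ℝ) * (L:ℝ) * Real.log (Fintype.card F)
      + (Module.finrank F ↥(TD ⊓ w2) : ℝ) * (L:ℝ) * Real.log (Fintype.card F)
      + 2 * (L:ℝ) * (Module.finrank F ↥TE : ℝ) * Real.log (Fintype.card F)
      - 2 * (L:ℝ) * ((V₁'.rank : ℝ) + (V₂'.rank : ℝ) + (V₃'.rank : ℝ))
          * Real.log (Fintype.card F)
      ≤ 2 * Hent NN Φ := by
    push_cast at comb SLB SL3 SLC SLD U1 U2 ⊢
    linarith [comb, SLB, SL3, SLC, SLD, U1, U2]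
  rw [show (2:ℝ) * (Hent NN Φ / Real.log (Fintype.card F))
      = (2 * Hent NN Φ) / Real.log (Fintype.card F) by ring,
    le_div_iff₀ hqpos]
  rcases max_choice (max ((Module.finrank F ↥(T123 ⊓ w1) : ℝ))
      ((Module.finrank F ↥(T123 ⊓ w2) : ℝ))) ((Module.finrank F ↥(T123 ⊓ w3) : ℝ)) with h2 | h2 <;>
    rw [h2]
  · rcases max_choice ((Module.finrank F ↥(T123 ⊓ w1) : ℝ))
        ((Module.finrank F ↥(T123 ⊓ w2) : ℝ)) with h1 | h1 <;> rw [h1]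
    · linarith [final1]
    · linarith [final2]
  · linarith [final3]



end AuxLCBC2
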